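/- arXiv:1210.8371 — 3 statements merged into one kernel-verified Lean document; each statement's English description precedes it below -/
import Mathlib

section
/- Let V be a real vector space and let I, S : V → V be linear maps with I ∘ I = -id, S ∘ S = id, and I ∘ S = -S ∘ I, and set T := I ∘ S. Let ζ ∈ ℂ with |ζ| ≠ 1 and define I_ζ := (1 - |ζ|²)⁻¹ • ( (1 + |ζ|²)•I + (2 Re ζ)•S - (2 Im ζ)•T ). Then I_ζ ∘ I_ζ = -id, and I₀ = I. -/
/-- With `I² = -id`, `S² = id`, `IS = -SI`, `T := IS`, and `ζ ∈ ℂ` with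
`|ζ| ≠ 1`, the endomorphism
`I_ζ = (1 - |ζ|²)⁻¹ ((1 + |ζ|²) I + (2 Re ζ) S - (2 Im ζ) T)` satisfies
`I_ζ² = -id`, and `I₀ = I`. -/
theorem stmt4 (V : Type*) [AddCommGroup V] [Module ℝ V]
    (I S : V →ₗ[ℝ] V)
    (hI : I ∘ₗ I = -LinearMap.id) (hS : S ∘ₗ S = LinearMap.id)
    (hIS : I ∘ₗ S = -(S ∘ₗ I)) (ζ : ℂ) (hζ : ‖ζ‖ ≠ 1) :
    let T : V →ₗ[ℝ] V := I ∘ₗ S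
    let Iζ : ℂ → (V →ₗ[ℝ] V) := fun z =>
      (1 - ‖z‖ ^ 2)⁻¹ •
        ((1 + ‖z‖ ^ 2) • I + (2 * z.re) • S - (2 * z.im) • T)
    Iζ ζ ∘ₗ Iζ ζ = -LinearMap.id ∧ Iζ 0 = I := by
  intro T Iζ
  -- work in the endomorphism ring
  have hA : (I * I : Module.End ℝ V) = -1 := hI
  have hB : (S * S : Module.End ℝ V) = 1 := hS
  have hAB : (I * S : Module.End ℝ V) = -(S * I) := hIS
  have hBA : (S * I : Module.End ℝ V) = -(I * S) := by rw [hAB, neg_neg]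
  have p3 : (I * (I * S) : Module.End ℝ V) = -S := by
    rw [← mul_assoc, hA]; simp
  have p4 : (S * (I * S) : Module.End ℝ V) = -I := by
    rw [← mul_assoc, hBA]; simp [mul_assoc, hB]
  have p5 : ((I * S) * I : Module.End ℝ V) = S := by
    rw [mul_assoc, hBA]; simp [← mul_assoc, hA]
  have p6 : ((I * S) * S : Module.End ℝ V) = I := by
    rw [mul_assoc, hB]; simp
  have p7 : ((I * S) * (I * S) : Module.End ℝ V) = 1 := by
    rw [mul_assoc, p4]; simp [← mul_assoc, hA]
  set r : ℝ := ‖ζ‖ with hr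
  have hr0 : (0 : ℝ) ≤ r := norm_nonneg ζ
  have hne : (1 : ℝ) - r ^ 2 ≠ 0 := by
    intro h
    apply hζ
    show r = 1
    nlinarith
  constructor
  · show ((1 - r ^ 2)⁻¹ • ((1 + r ^ 2) • I + (2 * ζ.re) • S - (2 * ζ.im) • T)) ∘ₗ
      ((1 - r ^ 2)⁻¹ • ((1 + r ^ 2) • I + (2 * ζ.re) • S - (2 * ζ.im) • T)) = -LinearMap.id
    have hT : T = I * S := rfl
    show ((1 - r ^ 2)⁻¹ • ((1 + r ^ 2) • I + (2 * ζ.re) • S - (2 * ζ.im) • T)) *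
      ((1 - r ^ 2)⁻¹ • ((1 + r ^ 2) • I + (2 * ζ.re) • S - (2 * ζ.im) • T)) = -1
    rw [hT]
    have key : ((1 + r ^ 2) • I + (2 * ζ.re) • S - (2 * ζ.im) • (I * S)) *
        ((1 + r ^ 2) • I + (2 * ζ.re) • S - (2 * ζ.im) • (I * S)) =
        (-(1 + r ^ 2) ^ 2 + (2 * ζ.re) ^ 2 + (2 * ζ.im) ^ 2) • (1 : Module.End ℝ V) := by
      simp only [sub_mul, mul_sub, add_mul, mul_add, smul_mul_assoc, mul_smul_comm,
        smul_smul, hA, hB, hBA, p3, p4, p5, p6, p7]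
      module
    rw [smul_mul_assoc, mul_smul_comm, key, smul_smul, smul_smul]
    have hrim : ζ.re ^ 2 + ζ.im ^ 2 = r ^ 2 := by
      rw [hr, Complex.sq_norm, Complex.normSq_apply]; ring
    have hc : (1 - r ^ 2)⁻¹ * (1 - r ^ 2)⁻¹ *
        (-(1 + r ^ 2) ^ 2 + (2 * ζ.re) ^ 2 + (2 * ζ.im) ^ 2) = -1 := by
      field_simp
      nlinarith [hrim]
    rw [hc, neg_smul, one_smul]
  · show (1 - ‖(0 : ℂ)‖ ^ 2)⁻¹ •
      ((1 + ‖(0 : ℂ)‖ ^ 2) • I + (2 * (0 : ℂ).re) • S - (2 * (0 : ℂ).im) • T) = I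
    simp
end

section
/- Let V be a real vector space, g : V × V → ℝ a symmetric nondegenerate bilinear form, and I, S : V → V linear maps with I ∘ I = -id, S ∘ S = id, I ∘ S = -S ∘ I, which are skew-adjoint with respect to g (g(Iv, w) = -g(v, Iw) and g(Sv, w) = -g(v, Sw) for all v, w). Set T := I ∘ S and define the complex-valued bilinear form ω(v, w) := g(Sv, w) + i·g(Tv, w). Then: (a) ω(Iv, w) = i·ω(v, w) and ω(v, Iw) = i·ω(v, w) for all v, w (ω has type (2,0) with respect to I); (b) ω(v, v) = 0 for all v (ω is alternating); (c) if ω(v, w) = 0 for all w ∈ V then v = 0 (ω is nondegenerate). -/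
/-- For a nondegenerate symmetric bilinear form `g` with `g`-skew-adjoint
`I, S` satisfying `I² = -id`, `S² = id`, `IS = -SI`, and `T := IS`, the complex bilinear
form `ω(v,w) = g(Sv,w) + i g(Tv,w)` has type (2,0) with respect to `I`, is alternating,
and is nondegenerate. -/
theorem stmt5 (V : Type*) [AddCommGroup V] [Module ℝ V]
    (g : LinearMap.BilinForm ℝ V) (hsymm : g.IsSymm) (hg : g.Nondegenerate)
    (I S : V →ₗ[ℝ] V)
    (hI : I ∘ₗ I = -LinearMap.id) (hS : S ∘ₗ S = LinearMap.id)
    (hIS : I ∘ₗ S = -(S ∘ₗ I))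
    (hIskew : ∀ v w : V, g (I v) w = - g v (I w))
    (hSskew : ∀ v w : V, g (S v) w = - g v (S w)) :
    let T : V →ₗ[ℝ] V := I ∘ₗ S
    let ω : V → V → ℂ := fun v w => (g (S v) w : ℂ) + Complex.I * (g (T v) w : ℂ)
    (∀ v w : V, ω (I v) w = Complex.I * ω v w) ∧
    (∀ v w : V, ω v (I w) = Complex.I * ω v w) ∧
    (∀ v : V, ω v v = 0) ∧
    (∀ v : V, (∀ w : V, ω v w = 0) → v = 0) := by
  intro T ω
  have hI' : ∀ v, I (I v) = -v := fun v => by simpa using LinearMap.congr_fun hI v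
  have hS' : ∀ v, S (S v) = v := fun v => by simpa using LinearMap.congr_fun hS v
  have hIS' : ∀ v, I (S v) = -(S (I v)) := fun v => by
    simpa using LinearMap.congr_fun hIS v
  have hSI : ∀ v, S (I v) = -(I (S v)) := fun v => by rw [hIS' v]; simp
  have hTv : ∀ v, T v = I (S v) := fun v => rfl
  -- ω(Iv, w) components
  have hSIv : ∀ v w, g (S (I v)) w = - g (T v) w := fun v w => by
    rw [hSI v, hTv]; simp
  have hTIv : ∀ v w, g (T (I v)) w = g (S v) w := fun v w => by
    rw [hTv, hSI v]; simp [hI' (S v)]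
  -- ω(v, Iw) components
  have hSvIw : ∀ v w, g (S v) (I w) = - g (T v) w := fun v w => by
    have := hIskew (S v) w
    rw [hTv]; linarith
  have hTvIw : ∀ v w, g (T v) (I w) = g (S v) w := fun v w => by
    have h1 := hIskew (T v) w
    have h2 : I (T v) = - S v := by rw [hTv, hI' (S v)]
    rw [h2] at h1
    simp at h1
    linarith
  -- T is skew
  have hTskew : ∀ v w, g (T v) w = - g v (T w) := by
    intro v w
    have h1 := hIskew (S v) w
    have h2 := hSskew v (I w)
    have h3 : S (I w) = -(I (S w)) := hSI w
    rw [h3] at h2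
    simp only [map_neg, LinearMap.neg_apply] at h2
    rw [hTv, hTv, h1, h2]
    ring
  refine ⟨?_, ?_, ?_, ?_⟩
  · intro v w
    show (g (S (I v)) w : ℂ) + Complex.I * (g (T (I v)) w : ℂ)
        = Complex.I * ((g (S v) w : ℂ) + Complex.I * (g (T v) w : ℂ))
    rw [hSIv, hTIv]
    push_cast
    ring_nf
    rw [Complex.I_sq]
    ring
  · intro v w
    show (g (S v) (I w) : ℂ) + Complex.I * (g (T v) (I w) : ℂ)
        = Complex.I * ((g (S v) w : ℂ) + Complex.I * (g (T v) w : ℂ))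
    rw [hSvIw, hTvIw]
    push_cast
    ring_nf
    rw [Complex.I_sq]
    ring
  · intro v
    have h1 : g (S v) v = 0 := by
      have a := hSskew v v
      have b : g v (S v) = g (S v) v := by simpa using hsymm.eq v (S v)
      rw [b] at a; linarith
    have h2 : g (T v) v = 0 := by
      have a := hTskew v v
      have b : g v (T v) = g (T v) v := by simpa using hsymm.eq v (T v)
      rw [b] at a; linarith
    show (g (S v) v : ℂ) + Complex.I * (g (T v) v : ℂ) = 0
    rw [h1, h2]; simp
  · intro v hv
    have hSv : ∀ w, g (S v) w = 0 := by
      intro w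
      have h : (g (S v) w : ℂ) + Complex.I * (g (T v) w : ℂ) = 0 := hv w
      have := congrArg Complex.re h
      simpa using this
    have : S v = 0 := hg.1 (S v) hSv
    have := congrArg S this
    rw [hS' v] at this
    simpa using this
end

section
/- Let W be a complex vector space and let τ : W → W be a real-linear map that is conjugate-linear (τ(c•w) = conj(c)•τ(w)) and an involution (τ ∘ τ = id). Let ζ ∈ ℂ with |ζ| ≠ 1. Define real-linear maps of W × W by I_ζ(A, Φ) := (1 - |ζ|²)⁻¹ • ( (1 + |ζ|²)•(i•A) + (2·conj ζ)•τΦ , (2·conj ζ)•τA + (1 + |ζ|²)•(i•Φ) ) and F(A, Φ) := (A - (i·conj ζ)•τΦ, Φ - (i·conj ζ)•τA), and let J(A, Φ) := (i•A, i•Φ). Then F ∘ I_ζ = J ∘ F. -/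
/-- For a conjugate-linear involution `τ` of a complex vector space `W`
and `ζ ∈ ℂ` with `|ζ| ≠ 1`, the map
`F(A,Φ) = (A - i ζ̄ τΦ, Φ - i ζ̄ τA)` intertwines
`I_ζ(A,Φ) = (1-|ζ|²)⁻¹ ((1+|ζ|²) iA + 2ζ̄ τΦ, 2ζ̄ τA + (1+|ζ|²) iΦ)`
with `J(A,Φ) = (iA, iΦ)`, i.e. `F ∘ I_ζ = J ∘ F`. -/
theorem stmt8 (W : Type*) [AddCommGroup W] [Module ℂ W]
    (τ : W →ₗ[ℝ] W)
    (hconj : ∀ (c : ℂ) (w : W), τ (c • w) = (starRingEnd ℂ) c • τ w)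
    (hinv : ∀ w : W, τ (τ w) = w)
    (ζ : ℂ) (hζ : ‖ζ‖ ≠ 1) :
    let Iζ : W × W → W × W := fun p =>
      (1 - ‖ζ‖ ^ 2)⁻¹ •
        ((1 + ‖ζ‖ ^ 2 : ℝ) • (Complex.I • p.1)
            + (2 * (starRingEnd ℂ) ζ) • τ p.2,
         (2 * (starRingEnd ℂ) ζ) • τ p.1
            + (1 + ‖ζ‖ ^ 2 : ℝ) • (Complex.I • p.2))
    let F : W × W → W × W := fun p =>
      (p.1 - (Complex.I * (starRingEnd ℂ) ζ) • τ p.2,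
       p.2 - (Complex.I * (starRingEnd ℂ) ζ) • τ p.1)
    let J : W × W → W × W := fun p => (Complex.I • p.1, Complex.I • p.2)
    ∀ p : W × W, F (Iζ p) = J (F p) := by
  intro Iζ F J p
  obtain ⟨A, Φ⟩ := p
  have hr : (1 : ℝ) - ‖ζ‖ ^ 2 ≠ 0 := by
    intro h
    apply hζ
    have : ‖ζ‖ ^ 2 = 1 := by linarith
    nlinarith [norm_nonneg ζ]
  have habs : ((‖ζ‖ : ℂ)) ^ 2 = ζ * (starRingEnd ℂ) ζ := by
    rw [Complex.mul_conj]
    norm_cast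
    exact Complex.sq_norm ζ
  simp only [Iζ, F, J, Prod.smul_fst, Prod.smul_snd, Prod.mk.injEq]
  constructor <;>
  · simp only [map_smul, map_add, hconj, map_mul, Complex.conj_I,
      starRingEnd_self_apply, hinv, smul_smul, smul_add, smul_sub]
    have hc : (1 : ℂ) - ζ * (starRingEnd ℂ) ζ ≠ 0 := by
      rw [← habs]
      have : ((1 - ‖ζ‖ ^ 2 : ℝ) : ℂ) ≠ 0 := by exact_mod_cast hr
      push_cast at this
      convert this using 2
    have hc' : (1 : ℂ) - (‖ζ‖ : ℂ) ^ 2 ≠ 0 := by rw [habs]; exact hc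
    match_scalars <;>
    · field_simp [hc, hc']
      ring_nf
      simp only [Complex.I_sq, map_ofNat, habs]
      try ring_nf
      try rfl
      try ring
      all_goals linear_combination 2 * habs
end
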